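/- Assume the form [·,·] is indefinite. Let x ∈ H be a nonzero vector (neutral or non-neutral) and suppose J₁ and J₂ are fundamental symmetries of (H, [·,·]) with ‖x‖_{J₁} < ‖x‖_{J₂}. Then there exists a fundamental symmetry J such that ‖x‖_{J₁} < ‖x‖_J < ‖x‖_{J₂}. -/

import Mathlib

open scoped ComplexOrder

/-- The indefinite (Krein) inner product `[x, y] := ⟪J₀ x, y⟫` induced by the
continuous linear involution `J₀`. -/
noncomputable def kform {H : Type*} [NormedAddCommGroup H] [InnerProductSpace ℂ H]
    (J₀ : H →L[ℂ] H) (x y : H) : ℂ :=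
  inner ℂ (J₀ x) y

/-- `J` is a fundamental symmetry of the Krein space `(H, [·,·])`:
a continuous linear involution, `[·,·]`-selfadjoint, with `[J x, x] > 0` for `x ≠ 0`. -/
def IsFundamentalSymmetry {H : Type*} [NormedAddCommGroup H] [InnerProductSpace ℂ H]
    (J₀ : H →L[ℂ] H) (J : H →L[ℂ] H) : Prop :=
  (∀ x, J (J x) = x) ∧
  (∀ x y, kform J₀ (J x) y = kform J₀ x (J y)) ∧
  (∀ x, x ≠ 0 → 0 < kform J₀ (J x) x)

/-- The `J`-norm `‖x‖_J := [J x, x] ^ (1/2)`. -/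
noncomputable def jnorm {H : Type*} [NormedAddCommGroup H] [InnerProductSpace ℂ H]
    (J₀ : H →L[ℂ] H) (J : H →L[ℂ] H) (x : H) : ℝ :=
  Real.sqrt (kform J₀ (J x) x).re

namespace KreinAux

variable {H : Type*} [NormedAddCommGroup H] [InnerProductSpace ℂ H]

lemma kform_add_right (J₀ : H →L[ℂ] H) (x y z : H) :
    kform J₀ x (y + z) = kform J₀ x y + kform J₀ x z := by
  simp [kform, inner_add_right]

lemma kform_sub_right (J₀ : H →L[ℂ] H) (x y z : H) :
    kform J₀ x (y - z) = kform J₀ x y - kform J₀ x z := by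
  simp [kform, inner_sub_right]

lemma kform_smul_right (J₀ : H →L[ℂ] H) (x y : H) (c : ℂ) :
    kform J₀ x (c • y) = c * kform J₀ x y := by
  simp [kform, inner_smul_right]

lemma kform_neg_right (J₀ : H →L[ℂ] H) (x y : H) :
    kform J₀ x (-y) = - kform J₀ x y := by
  simp [kform, inner_neg_right]

lemma kform_add_left (J₀ : H →L[ℂ] H) (x y z : H) :
    kform J₀ (x + y) z = kform J₀ x z + kform J₀ y z := by
  simp [kform, inner_add_left]

lemma kform_sub_left (J₀ : H →L[ℂ] H) (x y z : H) :
    kform J₀ (x - y) z = kform J₀ x z - kform J₀ y z := by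
  simp [kform, inner_sub_left]

lemma kform_smul_left (J₀ : H →L[ℂ] H) (x y : H) (c : ℂ) :
    kform J₀ (c • x) y = (starRingEnd ℂ) c * kform J₀ x y := by
  simp [kform, inner_smul_left, mul_comm]

lemma kform_neg_left (J₀ : H →L[ℂ] H) (x y : H) :
    kform J₀ (-x) y = - kform J₀ x y := by
  simp [kform, inner_neg_left]

lemma kform_conj (J₀ : H →L[ℂ] H)
    (hsa : ∀ x y : H, (inner ℂ (J₀ x) y : ℂ) = inner ℂ x (J₀ y)) (x y : H) :
    kform J₀ x y = (starRingEnd ℂ) (kform J₀ y x) := by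
  rw [kform, hsa, kform, inner_conj_symm]

/-- The "hyperbolic rotation" in the plane spanned by `p` (positive) and `n`
(negative), with parameters `c` ("cosh") and `s` ("sinh"). -/
noncomputable def Mmap (J₀ : H →L[ℂ] H) (p n : H) (c s : ℝ) : H →L[ℂ] H :=
  ContinuousLinearMap.id ℂ H
  + ((c : ℂ) - 1) • ((innerSL ℂ (J₀ p)).smulRight p - (innerSL ℂ (J₀ n)).smulRight n)
  + (s : ℂ) • ((innerSL ℂ (J₀ p)).smulRight n - (innerSL ℂ (J₀ n)).smulRight p)

lemma Mmap_apply (J₀ : H →L[ℂ] H) (p n : H) (c s : ℝ) (u : H) :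
    Mmap J₀ p n c s u
      = u + ((c : ℂ) - 1) • (kform J₀ p u • p - kform J₀ n u • n)
          + (s : ℂ) • (kform J₀ p u • n - kform J₀ n u • p) := by
  simp [Mmap, kform, ContinuousLinearMap.smulRight_apply]

lemma Mmap_comp (J₀ : H →L[ℂ] H) (p n : H)
    (hpp : kform J₀ p p = 1) (hnn : kform J₀ n n = -1)
    (hpn : kform J₀ p n = 0) (hnp : kform J₀ n p = 0)
    (c s c' s' : ℝ) (u : H) :
    Mmap J₀ p n c s (Mmap J₀ p n c' s' u)
      = Mmap J₀ p n (c*c' + s*s') (s*c' + c*s') u := by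
  simp only [Mmap_apply, kform_add_right, kform_sub_right, kform_smul_right,
    hpp, hnn, hpn, hnp]
  match_scalars <;> push_cast <;> ring

lemma Mmap_one_zero (J₀ : H →L[ℂ] H) (p n : H) (u : H) :
    Mmap J₀ p n 1 0 u = u := by
  simp [Mmap_apply]

lemma Mmap_adjoint (J₀ : H →L[ℂ] H)
    (hsa : ∀ x y : H, (inner ℂ (J₀ x) y : ℂ) = inner ℂ x (J₀ y))
    (p n : H) (c s : ℝ) (a b : H) :
    kform J₀ (Mmap J₀ p n c s a) b = kform J₀ a (Mmap J₀ p n c (-s) b) := by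
  have h1 : kform J₀ a p = (starRingEnd ℂ) (kform J₀ p a) := kform_conj J₀ hsa a p
  have h2 : kform J₀ a n = (starRingEnd ℂ) (kform J₀ n a) := kform_conj J₀ hsa a n
  simp only [Mmap_apply, kform_add_left, kform_sub_left, kform_smul_left,
    kform_add_right, kform_sub_right, kform_smul_right, map_sub, map_mul, map_one,
    Complex.conj_ofReal, h1, h2, Complex.ofReal_neg]
  ring

lemma Mmap_J (J₀ : H →L[ℂ] H) (J₁ : H →L[ℂ] H)
    (hJsym : ∀ x y, kform J₀ (J₁ x) y = kform J₀ x (J₁ y))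
    (p n : H) (hp : J₁ p = p) (hn : J₁ n = -n) (c s : ℝ) (u : H) :
    J₁ (Mmap J₀ p n c s u) = Mmap J₀ p n c (-s) (J₁ u) := by
  have hpu : kform J₀ p (J₁ u) = kform J₀ p u := by
    rw [← hJsym, hp]
  have hnu : kform J₀ n (J₁ u) = - kform J₀ n u := by
    rw [← hJsym, hn, kform_neg_left]
  simp only [Mmap_apply, map_add, map_smul, map_sub, hp, hn, hpu, hnu]
  match_scalars <;> ring

/-- The main construction: given a `J₁`-decomposition pair `(p, n)` not both
`[·,·]`-orthogonal to `x`, every value `c₀` above `‖x‖_{J₁}` is attained as the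
`J`-norm of `x` for some fundamental symmetry `J`. -/
lemma engine (J₀ J₁ : H →L[ℂ] H)
    (hsa : ∀ x y : H, (inner ℂ (J₀ x) y : ℂ) = inner ℂ x (J₀ y))
    (hJ₁ : IsFundamentalSymmetry J₀ J₁)
    (p n : H) (hp : J₁ p = p) (hn : J₁ n = -n)
    (hpp : kform J₀ p p = 1) (hnn : kform J₀ n n = -1)
    (x : H) (hx0 : x ≠ 0)
    (hKne : kform J₀ p x ≠ 0 ∨ kform J₀ n x ≠ 0)
    (c₀ : ℝ) (hc₀ : jnorm J₀ J₁ x < c₀) :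
    ∃ J : H →L[ℂ] H, IsFundamentalSymmetry J₀ J ∧ jnorm J₀ J x = c₀ := by
  obtain ⟨hJinv, hJsym, hJpos⟩ := hJ₁
  -- orthogonality of p and n
  have hpn : kform J₀ p n = 0 := by
    have h := hJsym p n
    rw [hp, hn, kform_neg_right] at h
    linear_combination h / 2
  have hnp : kform J₀ n p = 0 := by
    rw [kform_conj J₀ hsa n p, hpn, map_zero]
  -- the one-parameter family
  set c₁ : ℝ → ℝ := fun s => Real.sqrt (1 + s^2) with hc₁def
  have hc₁sq : ∀ s : ℝ, (c₁ s)^2 = 1 + s^2 := fun s => Real.sq_sqrt (by positivity)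
  set Jm : ℝ → (H →L[ℂ] H) := fun s =>
    (Mmap J₀ p n (c₁ s) s).comp ((J₁).comp (Mmap J₀ p n (c₁ s) (-s))) with hJmdef
  have hJm_apply : ∀ s u, Jm s u = Mmap J₀ p n (c₁ s) s (J₁ (Mmap J₀ p n (c₁ s) (-s) u)) :=
    fun s u => rfl
  have hMinv : ∀ (s : ℝ) (u : H),
      Mmap J₀ p n (c₁ s) s (Mmap J₀ p n (c₁ s) (-s) u) = u := by
    intro s u
    rw [Mmap_comp J₀ p n hpp hnn hpn hnp]
    have h1 : c₁ s * c₁ s + s * (-s) = 1 := by nlinarith [hc₁sq s]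
    have h2 : s * c₁ s + c₁ s * (-s) = 0 := by ring
    rw [h1, h2, Mmap_one_zero]
  have hMinv' : ∀ (s : ℝ) (u : H),
      Mmap J₀ p n (c₁ s) (-s) (Mmap J₀ p n (c₁ s) s u) = u := by
    intro s u
    rw [Mmap_comp J₀ p n hpp hnn hpn hnp]
    have h1 : c₁ s * c₁ s + (-s) * s = 1 := by nlinarith [hc₁sq s]
    have h2 : (-s) * c₁ s + c₁ s * s = 0 := by ring
    rw [h1, h2, Mmap_one_zero]
  have hfs : ∀ s : ℝ, IsFundamentalSymmetry J₀ (Jm s) := by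
    intro s
    refine ⟨?_, ?_, ?_⟩
    · intro u
      rw [hJm_apply, hJm_apply, hMinv', hJinv, hMinv]
    · intro u v
      rw [hJm_apply, hJm_apply, Mmap_adjoint J₀ hsa, hJsym,
        Mmap_adjoint J₀ hsa p n (c₁ s) (-s), neg_neg]
    · intro u hu
      rw [hJm_apply, Mmap_adjoint J₀ hsa]
      refine hJpos _ (fun h => hu ?_)
      rw [← hMinv s u, h, map_zero]
  -- value computation
  set P := kform J₀ p x with hPdef
  set N := kform J₀ n x with hNdef
  set K : ℝ := Complex.normSq P + Complex.normSq N with hKdef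
  set ρ : ℝ := (P * (starRingEnd ℂ) N).re with hρdef
  set a₂ : ℝ := (kform J₀ (J₁ x) x).re with ha₂def
  have hval : ∀ s : ℝ,
      (kform J₀ (Jm s x) x).re = a₂ + 2*K*s^2 + 4*ρ*s*(c₁ s) := by
    intro s
    have e1 : J₁ (Mmap J₀ p n (c₁ s) (-s) x) = Mmap J₀ p n (c₁ s) s (J₁ x) := by
      rw [Mmap_J J₀ J₁ hJsym p n hp hn, neg_neg]
    have e2 : kform J₀ (J₁ x) p = (starRingEnd ℂ) P := by
      rw [hJsym, hp, kform_conj J₀ hsa x p]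
    have e3 : kform J₀ (J₁ x) n = - (starRingEnd ℂ) N := by
      rw [hJsym, hn, kform_neg_right, kform_conj J₀ hsa x n]
    rw [hJm_apply, e1, Mmap_comp J₀ p n hpp hnn hpn hnp,
      Mmap_adjoint J₀ hsa, Mmap_apply]
    simp only [kform_add_right, kform_sub_right, kform_smul_right, e2, e3,
      ← hPdef, ← hNdef, ← ha₂def]
    have hcs := hc₁sq s
    simp only [Complex.add_re, Complex.mul_re, Complex.mul_im, Complex.sub_re,
      Complex.sub_im, Complex.neg_re, Complex.neg_im, Complex.ofReal_re,
      Complex.ofReal_im, Complex.one_re, Complex.one_im, Complex.conj_re,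
      Complex.conj_im, Complex.ofReal_neg, hρdef, hKdef, Complex.normSq_apply,
      Complex.add_im]
    nlinarith [hcs]
  -- positivity of `a₂` and basic bounds
  have ha₂pos : 0 < a₂ := by
    have h := hJpos x hx0
    rw [Complex.lt_def] at h
    simpa using h.1
  have hKpos : 0 < K := by
    rcases hKne with h | h
    · have : 0 < Complex.normSq P := by
        simpa [Complex.normSq_pos] using h
      have h2 : 0 ≤ Complex.normSq N := Complex.normSq_nonneg N
      simp only [hKdef]; linarith
    · have : 0 < Complex.normSq N := by
        simpa [Complex.normSq_pos] using h
      have h2 : 0 ≤ Complex.normSq P := Complex.normSq_nonneg P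
      simp only [hKdef]; linarith
  have hc₀pos : 0 < c₀ := lt_of_le_of_lt (Real.sqrt_nonneg _) hc₀
  have ha₂lt : a₂ < c₀^2 := by
    have h1 : jnorm J₀ J₁ x = Real.sqrt a₂ := rfl
    rw [h1] at hc₀
    nlinarith [Real.sq_sqrt ha₂pos.le, Real.sqrt_nonneg a₂]
  -- the real value function, and the intermediate value theorem
  set f : ℝ → ℝ := fun s => a₂ + 2*K*s^2 + 4*ρ*s*Real.sqrt (1 + s^2) with hfdef
  have hfcont : Continuous f := by
    apply Continuous.add
    apply Continuous.add continuous_const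
    · fun_prop
    · exact (continuous_const.mul continuous_id).mul
        (Real.continuous_sqrt.comp (by fun_prop))
  set T : ℝ := c₀ / Real.sqrt (2*K) with hTdef
  have hTpos : 0 < T := div_pos hc₀pos (Real.sqrt_pos.2 (by linarith))
  have hT2 : 2*K*T^2 = c₀^2 := by
    rw [hTdef, div_pow, Real.sq_sqrt (by linarith : (0:ℝ) ≤ 2*K)]
    field_simp
  set σ : ℝ := if 0 ≤ ρ then T else -T with hσdef
  have hσ2 : σ^2 = T^2 := by
    rw [hσdef]; split <;> ring
  have hρσ : 0 ≤ 4*ρ*σ*Real.sqrt (1 + σ^2) := by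
    have hs := Real.sqrt_nonneg (1 + σ^2)
    have hρσ' : 0 ≤ ρ * σ := by
      rw [hσdef]; split_ifs with h
      · exact mul_nonneg h hTpos.le
      · push_neg at h; nlinarith
    nlinarith
  have hfσ : c₀^2 ≤ f σ := by
    have h1 : f σ = a₂ + 2*K*σ^2 + 4*ρ*σ*Real.sqrt (1 + σ^2) := rfl
    have h2 : 2*K*σ^2 = c₀^2 := by rw [hσ2]; exact hT2
    rw [h1]
    linarith
  have hf0 : f 0 = a₂ := by simp [hfdef]
  have hmem : c₀^2 ∈ Set.uIcc (f 0) (f σ) := by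
    rw [hf0]
    exact Set.mem_uIcc.2 (Or.inl ⟨ha₂lt.le, hfσ⟩)
  obtain ⟨sstar, _, hsstar⟩ := intermediate_value_uIcc hfcont.continuousOn hmem
  refine ⟨Jm sstar, hfs sstar, ?_⟩
  have e1 : jnorm J₀ (Jm sstar) x = Real.sqrt ((kform J₀ (Jm sstar x) x).re) := rfl
  rw [e1, hval sstar]
  have e2 : a₂ + 2*K*sstar^2 + 4*ρ*sstar*(c₁ sstar) = f sstar := rfl
  rw [e2, hsstar]
  exact Real.sqrt_sq hc₀pos.le

lemma unit_vec_pos (J₀ : H →L[ℂ] H) (w : H) (hpos : 0 < kform J₀ w w) :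
    ∃ t : ℝ, 0 < t ∧ kform J₀ ((t:ℂ) • w) ((t:ℂ) • w) = 1 := by
  have h := Complex.lt_def.mp hpos
  have hre : 0 < (kform J₀ w w).re := by simpa using h.1
  have him : (kform J₀ w w).im = 0 := by simpa using h.2.symm
  refine ⟨(Real.sqrt (kform J₀ w w).re)⁻¹, by positivity, ?_⟩
  rw [kform_smul_left, kform_smul_right]
  have hw : kform J₀ w w = ((kform J₀ w w).re : ℂ) := Complex.ext rfl (by simpa using him)
  rw [hw, Complex.conj_ofReal]
  have h1 : Real.sqrt (kform J₀ w w).re ≠ 0 := by positivity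
  have h2 := Real.mul_self_sqrt hre.le
  norm_cast
  field_simp
  rw [Real.sq_sqrt hre.le]

lemma unit_vec_neg (J₀ : H →L[ℂ] H) (w : H) (hneg : kform J₀ w w < 0) :
    ∃ t : ℝ, 0 < t ∧ kform J₀ ((t:ℂ) • w) ((t:ℂ) • w) = -1 := by
  have h := Complex.lt_def.mp hneg
  have hre : (kform J₀ w w).re < 0 := by simpa using h.1
  have him : (kform J₀ w w).im = 0 := by simpa using h.2
  have hre' : 0 < -(kform J₀ w w).re := by linarith
  refine ⟨(Real.sqrt (-(kform J₀ w w).re))⁻¹, by positivity, ?_⟩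
  rw [kform_smul_left, kform_smul_right]
  have hw : kform J₀ w w = ((kform J₀ w w).re : ℂ) := Complex.ext rfl (by simpa using him)
  rw [hw, Complex.conj_ofReal]
  have h1 : Real.sqrt (-(kform J₀ w w).re) ≠ 0 := ne_of_gt (Real.sqrt_pos.2 hre')
  have h2 := Real.mul_self_sqrt (by linarith : (0:ℝ) ≤ -(kform J₀ w w).re)
  norm_cast
  field_simp
  rw [Real.sq_sqrt hre'.le]; norm_num

end KreinAux

open KreinAux in
theorem exists_fundamentalSymmetry_jnorm_between
    {H : Type*} [NormedAddCommGroup H] [InnerProductSpace ℂ H] [CompleteSpace H]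
    (J₀ : H →L[ℂ] H)
    (hinv : ∀ x, J₀ (J₀ x) = x)
    (hsa : ∀ x y : H, (inner ℂ (J₀ x) y : ℂ) = inner ℂ x (J₀ y))
    (hindef : ∃ u v : H, 0 < kform J₀ u u ∧ kform J₀ v v < 0)
    (x : H) (hx0 : x ≠ 0)
    (J₁ J₂ : H →L[ℂ] H) (hJ₁ : IsFundamentalSymmetry J₀ J₁) (hJ₂ : IsFundamentalSymmetry J₀ J₂)
    (hlt : jnorm J₀ J₁ x < jnorm J₀ J₂ x) :
    ∃ J : H →L[ℂ] H, IsFundamentalSymmetry J₀ J ∧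
      jnorm J₀ J₁ x < jnorm J₀ J x ∧ jnorm J₀ J x < jnorm J₀ J₂ x := by
  obtain ⟨u, v, huu, hvv⟩ := hindef
  have hJinv := hJ₁.1
  have hJsym := hJ₁.2.1
  have hJpos := hJ₁.2.2
  set c₀ : ℝ := (jnorm J₀ J₁ x + jnorm J₀ J₂ x)/2 with hc₀def
  have hac₀ : jnorm J₀ J₁ x < c₀ := by rw [hc₀def]; linarith
  have hc₀b : c₀ < jnorm J₀ J₂ x := by rw [hc₀def]; linarith
  suffices hsuff : ∃ J, IsFundamentalSymmetry J₀ J ∧ jnorm J₀ J x = c₀ by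
    obtain ⟨J, hJ, hjv⟩ := hsuff
    exact ⟨J, hJ, by rw [hjv]; exact hac₀, by rw [hjv]; exact hc₀b⟩
  have hu0 : u ≠ 0 := by
    rintro rfl
    simp [kform] at huu
  have hv0 : v ≠ 0 := by
    rintro rfl
    simp [kform] at hvv
  by_cases hxp : x + J₁ x = 0
  · -- `x` is a negative eigenvector of `J₁`
    have hJx : J₁ x = -x := by
      have := eq_neg_of_add_eq_zero_right hxp
      exact this
    have hxx : kform J₀ x x < 0 := by
      have h := hJpos x hx0
      rw [hJx, kform_neg_left] at h
      exact neg_pos.mp h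
    obtain ⟨t, ht, hnn⟩ := unit_vec_neg J₀ x hxx
    have hJn : J₁ ((t:ℂ) • x) = -((t:ℂ) • x) := by
      rw [map_smul, hJx, smul_neg]
    have hnx : kform J₀ ((t:ℂ) • x) x ≠ 0 := by
      rw [kform_smul_left, Complex.conj_ofReal]
      exact mul_ne_zero (by exact_mod_cast ht.ne') (ne_of_lt hxx)
    -- construct a positive unit eigenvector from `u`
    have hJw : J₁ (u + J₁ u) = u + J₁ u := by
      rw [map_add, hJinv, add_comm]
    have hww : 0 < kform J₀ (u + J₁ u) (u + J₁ u) := by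
      have e1 : kform J₀ (J₁ u) (J₁ u) = kform J₀ u u := by rw [hJsym, hJinv]
      have e2 : kform J₀ u (J₁ u) = kform J₀ (J₁ u) u := (hJsym u u).symm
      have e : kform J₀ (u + J₁ u) (u + J₁ u)
          = (kform J₀ u u + kform J₀ (J₁ u) u) + (kform J₀ u u + kform J₀ (J₁ u) u) := by
        rw [kform_add_left, kform_add_right, kform_add_right, e1, e2]
        ring
      rw [e]
      exact add_pos (add_pos huu (hJpos u hu0)) (add_pos huu (hJpos u hu0))
    obtain ⟨t', ht', hpp⟩ := unit_vec_pos J₀ (u + J₁ u) hww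
    have hJp : J₁ ((t':ℂ) • (u + J₁ u)) = (t':ℂ) • (u + J₁ u) := by
      rw [map_smul, hJw]
    exact engine J₀ J₁ hsa ⟨hJinv, hJsym, hJpos⟩ _ _ hJp hJn hpp hnn x hx0
      (Or.inr hnx) c₀ hac₀
  · -- the positive `J₁`-part of `x` is nonzero
    have hJw : J₁ (x + J₁ x) = x + J₁ x := by
      rw [map_add, hJinv, add_comm]
    have hww : 0 < kform J₀ (x + J₁ x) (x + J₁ x) := by
      have h := hJpos _ hxp
      rwa [hJw] at h
    obtain ⟨t, ht, hpp⟩ := unit_vec_pos J₀ (x + J₁ x) hww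
    have hJp : J₁ ((t:ℂ) • (x + J₁ x)) = (t:ℂ) • (x + J₁ x) := by
      rw [map_smul, hJw]
    have hwx : kform J₀ (x + J₁ x) x ≠ 0 := by
      intro h0
      have e1 : kform J₀ (x + J₁ x) (J₁ x) = kform J₀ (x + J₁ x) x := by
        rw [← hJsym, hJw]
      have e : kform J₀ (x + J₁ x) (x + J₁ x)
          = kform J₀ (x + J₁ x) x + kform J₀ (x + J₁ x) x := by
        rw [kform_add_right, e1]
      rw [e, h0, add_zero] at hww
      exact lt_irrefl _ hww
    have hpx : kform J₀ ((t:ℂ) • (x + J₁ x)) x ≠ 0 := by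
      rw [kform_smul_left, Complex.conj_ofReal]
      exact mul_ne_zero (by exact_mod_cast ht.ne') hwx
    -- construct a negative unit eigenvector from `v`
    have hJn' : J₁ (v - J₁ v) = -(v - J₁ v) := by
      rw [map_sub, hJinv, neg_sub]
    have hnn' : kform J₀ (v - J₁ v) (v - J₁ v) < 0 := by
      have e1 : kform J₀ (J₁ v) (J₁ v) = kform J₀ v v := by rw [hJsym, hJinv]
      have e2 : kform J₀ v (J₁ v) = kform J₀ (J₁ v) v := (hJsym v v).symm
      have e : kform J₀ (v - J₁ v) (v - J₁ v)
          = (kform J₀ v v - kform J₀ (J₁ v) v) + (kform J₀ v v - kform J₀ (J₁ v) v) := by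
        rw [kform_sub_left, kform_sub_right, kform_sub_right, e1, e2]
        ring
      have h1 : kform J₀ v v - kform J₀ (J₁ v) v < 0 :=
        sub_neg.mpr (lt_trans hvv (hJpos v hv0))
      rw [e]
      have := add_lt_add h1 h1
      simpa using this
    obtain ⟨t'', ht'', hnn⟩ := unit_vec_neg J₀ (v - J₁ v) hnn'
    have hJn : J₁ ((t'':ℂ) • (v - J₁ v)) = -((t'':ℂ) • (v - J₁ v)) := by
      rw [map_smul, hJn', smul_neg]
    exact engine J₀ J₁ hsa ⟨hJinv, hJsym, hJpos⟩ _ _ hJp hJn hpp hnn x hx0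
      (Or.inl hpx) c₀ hac₀
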